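/- arXiv:1301.0151 — 2 statements merged into one kernel-verified Lean document; each statement's English description precedes it below -/
import Mathlib

section
/- In the slice process (the 2D majority rule model with $2 \times 2$ hyperedges restricted to the slice $S_3 = \mathbb{Z} \times \{-1,0,1\}$ with the monotone right-boundary modification), the drift of the sum $\Sigma_t = X_t(-1) + X_t(0) + X_t(1)$ satisfies $D(\Sigma_t) = 2(N(X_t) - 1)$ where $N(X_t) = \mathbf{1}\{|X_t^+| \neq 1\} + \mathbf{1}\{|X_t^-| \neq 1\}$, $X_t^+ = X_t(1) - X_t(0)$ and $X_t^- = X_t(-1) - X_t(0)$. -/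
/-- Configuration of the slice process determined by the rightmost-1 positions `X`:
vertex `(v₁, v₂)` is in state 1 iff `|v₂| ≤ 1` (the vertex lies in the slice
`S₃ = ℤ × {-1,0,1}`) and `v₁ ≤ X v₂`. -/
def sliceState (X : ℤ → ℤ) (v : ℤ × ℤ) : Bool := decide (|v.2| ≤ 1 ∧ v.1 ≤ X v.2)

/-- Number of state-1 vertices in the `2 × 2` square with lower-left corner `p`. -/
noncomputable def sliceOnes (X : ℤ → ℤ) (p : ℤ × ℤ) : ℕ :=
  ((Finset.Icc p (p + (1, 1))).filter fun v => sliceState X v = true).card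

/-- Effect on the rightmost-1 positions of the majority rule update (ties going to state 1)
of the `2 × 2` square with lower-left corner `p`, with the two modifications defining the
slice process: vertices outside the slice are frozen in state 0 (so a square is filled with
1's only if it lies in the slice, i.e. `p.2 ∈ {-1, 0}`) and updates placing a 1 to the right
of a 0 in the same row are suppressed (the square is filled with 1's only if every vertex to
its left in both of its rows is in state 1, i.e. `X r ≥ p.1 - 1` for both rows). -/
noncomputable def sliceUpdate (X : ℤ → ℤ) (p : ℤ × ℤ) : ℤ → ℤ :=
  if sliceOnes X p < 2 then
    fun r => if r = p.2 ∨ r = p.2 + 1 then min (X r) (p.1 - 1) else X r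
  else if (p.2 = -1 ∨ p.2 = 0) ∧ p.1 - 1 ≤ X p.2 ∧ p.1 - 1 ≤ X (p.2 + 1) then
    fun r => if r = p.2 ∨ r = p.2 + 1 then max (X r) (p.1 + 1) else X r
  else X

/-- The sum `Σ = X(-1) + X(0) + X(1)` of the three rightmost-1 positions. -/
def sliceSum (X : ℤ → ℤ) : ℤ := X (-1) + X 0 + X 1

/-- The drift `D(Σ)` of the sum: since every `2 × 2` square is updated at rate one, it is the
sum over all squares of the change of `Σ` produced by the update of that square. -/
noncomputable def sumDrift (X : ℤ → ℤ) : ℤ :=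
  ∑ᶠ p : ℤ × ℤ, (sliceSum (sliceUpdate X p) - sliceSum X)

lemma icc_eq (a b : ℤ) : Finset.Icc ((a,b) : ℤ×ℤ) ((a,b) + (1,1)) =
    {(a,b),(a+1,b),(a,b+1),(a+1,b+1)} := by
  ext ⟨u,v⟩
  simp [Finset.mem_Icc, Prod.le_def, Prod.ext_iff]
  omega

lemma ones_eq (X : ℤ → ℤ) (a b : ℤ) : sliceOnes X (a,b) =
    (if |b| ≤ 1 ∧ a ≤ X b then 1 else 0) + (if |b| ≤ 1 ∧ a+1 ≤ X b then 1 else 0)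
    + (if |b+1| ≤ 1 ∧ a ≤ X (b+1) then 1 else 0) + (if |b+1| ≤ 1 ∧ a+1 ≤ X (b+1) then 1 else 0) := by
  rw [sliceOnes, Finset.card_filter, icc_eq]
  rw [Finset.sum_insert (by simp [Prod.ext_iff]; try omega),
      Finset.sum_insert (by simp [Prod.ext_iff]; try omega),
      Finset.sum_insert (by simp [Prod.ext_iff]; try omega),
      Finset.sum_singleton]
  simp only [sliceState, decide_eq_true_eq]
  omega

lemma update_apply' (X : ℤ → ℤ) (p : ℤ × ℤ) (r : ℤ) : sliceUpdate X p r =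
    if sliceOnes X p < 2 then
      (if r = p.2 ∨ r = p.2 + 1 then min (X r) (p.1 - 1) else X r)
    else if (p.2 = -1 ∨ p.2 = 0) ∧ p.1 - 1 ≤ X p.2 ∧ p.1 - 1 ≤ X (p.2 + 1) then
      (if r = p.2 ∨ r = p.2 + 1 then max (X r) (p.1 + 1) else X r)
    else X r := by
  unfold sliceUpdate
  split_ifs with h1 h2 <;> simp_all

lemma update_apply (X : ℤ → ℤ) (a b r : ℤ) : sliceUpdate X (a,b) r =
    if sliceOnes X (a,b) < 2 then
      (if r = b ∨ r = b + 1 then min (X r) (a - 1) else X r)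
    else if (b = -1 ∨ b = 0) ∧ a - 1 ≤ X b ∧ a - 1 ≤ X (b+1) then
      (if r = b ∨ r = b + 1 then max (X r) (a + 1) else X r)
    else X r := update_apply' X (a,b) r

noncomputable def F (X : ℤ → ℤ) (p : ℤ × ℤ) : ℤ := sliceSum (sliceUpdate X p) - sliceSum X

def E (x y a : ℤ) : ℤ :=
  if x = y then (if a = x then 2 else 0)
  else if x - y = 1 ∨ y - x = 1 then (if a = min x y then 1 else if a = max x y then -1 else 0)
  else (if a = min x y then 1 else if a = min x y + 1 then 2 else if a = max x y then -1 else 0)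

set_option maxHeartbeats 1000000 in
lemma pair_diff (x y a : ℤ) :
  (if ((if a ≤ x then 1 else 0) + (if a+1 ≤ x then 1 else 0) + (if a ≤ y then 1 else 0)
      + (if a+1 ≤ y then 1 else 0) : ℕ) < 2
   then (min x (a-1) - x) + (min y (a-1) - y)
   else if a - 1 ≤ x ∧ a - 1 ≤ y then (max x (a+1) - x) + (max y (a+1) - y) else 0)
    = E x y a := by
  rcases le_or_gt x y with hxy | hxy
  case _ =>
    have mxy : min x y = x := min_eq_left hxy
    have Mxy : max x y = y := max_eq_right hxy
    rcases (show a+1 ≤ x ∨ a = x ∨ a = x+1 ∨ x+2 ≤ a by omega) with hx|hx|hx|hx <;>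
      rcases (show a+1 ≤ y ∨ a = y ∨ a = y+1 ∨ y+2 ≤ a by omega) with hy|hy|hy|hy
    · have px1 : a ≤ x := by omega
      have px2 : a + 1 ≤ x := by omega
      have px3 : a - 1 ≤ x := by omega
      have mx : min x (a-1) = a - 1 := min_eq_right (by omega)
      have Mx : max x (a+1) = x := max_eq_left (by omega)
      have py1 : a ≤ y := by omega
      have py2 : a + 1 ≤ y := by omega
      have py3 : a - 1 ≤ y := by omega
      have my : min y (a-1) = a - 1 := min_eq_right (by omega)
      have My : max y (a+1) = y := max_eq_left (by omega)
      simp [E, mxy, Mxy, px1, px2, px3, mx, Mx, py1, py2, py3, my, My]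
      split_ifs <;> omega
    · have px1 : a ≤ x := by omega
      have px2 : a + 1 ≤ x := by omega
      have px3 : a - 1 ≤ x := by omega
      have mx : min x (a-1) = a - 1 := min_eq_right (by omega)
      have Mx : max x (a+1) = x := max_eq_left (by omega)
      have py1 : a ≤ y := by omega
      have py2 : ¬ (a + 1 ≤ y) := by omega
      have py3 : a - 1 ≤ y := by omega
      have my : min y (a-1) = a - 1 := min_eq_right (by omega)
      have My : max y (a+1) = a + 1 := max_eq_right (by omega)
      simp [E, mxy, Mxy, px1, px2, px3, mx, Mx, py1, py2, py3, my, My]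
      split_ifs <;> omega
    · have px1 : a ≤ x := by omega
      have px2 : a + 1 ≤ x := by omega
      have px3 : a - 1 ≤ x := by omega
      have mx : min x (a-1) = a - 1 := min_eq_right (by omega)
      have Mx : max x (a+1) = x := max_eq_left (by omega)
      have py1 : ¬ (a ≤ y) := by omega
      have py2 : ¬ (a + 1 ≤ y) := by omega
      have py3 : a - 1 ≤ y := by omega
      have my : min y (a-1) = y := min_eq_left (by omega)
      have My : max y (a+1) = a + 1 := max_eq_right (by omega)
      simp [E, mxy, Mxy, px1, px2, px3, mx, Mx, py1, py2, py3, my, My]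
      split_ifs <;> omega
    · have px1 : a ≤ x := by omega
      have px2 : a + 1 ≤ x := by omega
      have px3 : a - 1 ≤ x := by omega
      have mx : min x (a-1) = a - 1 := min_eq_right (by omega)
      have Mx : max x (a+1) = x := max_eq_left (by omega)
      have py1 : ¬ (a ≤ y) := by omega
      have py2 : ¬ (a + 1 ≤ y) := by omega
      have py3 : ¬ (a - 1 ≤ y) := by omega
      have my : min y (a-1) = y := min_eq_left (by omega)
      have My : max y (a+1) = a + 1 := max_eq_right (by omega)
      simp [E, mxy, Mxy, px1, px2, px3, mx, Mx, py1, py2, py3, my, My]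
      split_ifs <;> omega
    · have px1 : a ≤ x := by omega
      have px2 : ¬ (a + 1 ≤ x) := by omega
      have px3 : a - 1 ≤ x := by omega
      have mx : min x (a-1) = a - 1 := min_eq_right (by omega)
      have Mx : max x (a+1) = a + 1 := max_eq_right (by omega)
      have py1 : a ≤ y := by omega
      have py2 : a + 1 ≤ y := by omega
      have py3 : a - 1 ≤ y := by omega
      have my : min y (a-1) = a - 1 := min_eq_right (by omega)
      have My : max y (a+1) = y := max_eq_left (by omega)
      simp [E, mxy, Mxy, px1, px2, px3, mx, Mx, py1, py2, py3, my, My]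
      split_ifs <;> omega
    · have px1 : a ≤ x := by omega
      have px2 : ¬ (a + 1 ≤ x) := by omega
      have px3 : a - 1 ≤ x := by omega
      have mx : min x (a-1) = a - 1 := min_eq_right (by omega)
      have Mx : max x (a+1) = a + 1 := max_eq_right (by omega)
      have py1 : a ≤ y := by omega
      have py2 : ¬ (a + 1 ≤ y) := by omega
      have py3 : a - 1 ≤ y := by omega
      have my : min y (a-1) = a - 1 := min_eq_right (by omega)
      have My : max y (a+1) = a + 1 := max_eq_right (by omega)
      simp [E, mxy, Mxy, px1, px2, px3, mx, Mx, py1, py2, py3, my, My]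
      split_ifs <;> omega
    · have px1 : a ≤ x := by omega
      have px2 : ¬ (a + 1 ≤ x) := by omega
      have px3 : a - 1 ≤ x := by omega
      have mx : min x (a-1) = a - 1 := min_eq_right (by omega)
      have Mx : max x (a+1) = a + 1 := max_eq_right (by omega)
      have py1 : ¬ (a ≤ y) := by omega
      have py2 : ¬ (a + 1 ≤ y) := by omega
      have py3 : a - 1 ≤ y := by omega
      have my : min y (a-1) = y := min_eq_left (by omega)
      have My : max y (a+1) = a + 1 := max_eq_right (by omega)
      simp [E, mxy, Mxy, px1, px2, px3, mx, Mx, py1, py2, py3, my, My]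
      split_ifs <;> omega
    · have px1 : a ≤ x := by omega
      have px2 : ¬ (a + 1 ≤ x) := by omega
      have px3 : a - 1 ≤ x := by omega
      have mx : min x (a-1) = a - 1 := min_eq_right (by omega)
      have Mx : max x (a+1) = a + 1 := max_eq_right (by omega)
      have py1 : ¬ (a ≤ y) := by omega
      have py2 : ¬ (a + 1 ≤ y) := by omega
      have py3 : ¬ (a - 1 ≤ y) := by omega
      have my : min y (a-1) = y := min_eq_left (by omega)
      have My : max y (a+1) = a + 1 := max_eq_right (by omega)
      simp [E, mxy, Mxy, px1, px2, px3, mx, Mx, py1, py2, py3, my, My]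
      split_ifs <;> omega
    · have px1 : ¬ (a ≤ x) := by omega
      have px2 : ¬ (a + 1 ≤ x) := by omega
      have px3 : a - 1 ≤ x := by omega
      have mx : min x (a-1) = x := min_eq_left (by omega)
      have Mx : max x (a+1) = a + 1 := max_eq_right (by omega)
      have py1 : a ≤ y := by omega
      have py2 : a + 1 ≤ y := by omega
      have py3 : a - 1 ≤ y := by omega
      have my : min y (a-1) = a - 1 := min_eq_right (by omega)
      have My : max y (a+1) = y := max_eq_left (by omega)
      simp [E, mxy, Mxy, px1, px2, px3, mx, Mx, py1, py2, py3, my, My]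
      split_ifs <;> omega
    · have px1 : ¬ (a ≤ x) := by omega
      have px2 : ¬ (a + 1 ≤ x) := by omega
      have px3 : a - 1 ≤ x := by omega
      have mx : min x (a-1) = x := min_eq_left (by omega)
      have Mx : max x (a+1) = a + 1 := max_eq_right (by omega)
      have py1 : a ≤ y := by omega
      have py2 : ¬ (a + 1 ≤ y) := by omega
      have py3 : a - 1 ≤ y := by omega
      have my : min y (a-1) = a - 1 := min_eq_right (by omega)
      have My : max y (a+1) = a + 1 := max_eq_right (by omega)
      simp [E, mxy, Mxy, px1, px2, px3, mx, Mx, py1, py2, py3, my, My]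
      split_ifs <;> omega
    · have px1 : ¬ (a ≤ x) := by omega
      have px2 : ¬ (a + 1 ≤ x) := by omega
      have px3 : a - 1 ≤ x := by omega
      have mx : min x (a-1) = x := min_eq_left (by omega)
      have Mx : max x (a+1) = a + 1 := max_eq_right (by omega)
      have py1 : ¬ (a ≤ y) := by omega
      have py2 : ¬ (a + 1 ≤ y) := by omega
      have py3 : a - 1 ≤ y := by omega
      have my : min y (a-1) = y := min_eq_left (by omega)
      have My : max y (a+1) = a + 1 := max_eq_right (by omega)
      simp [E, mxy, Mxy, px1, px2, px3, mx, Mx, py1, py2, py3, my, My]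
      split_ifs <;> omega
    · have px1 : ¬ (a ≤ x) := by omega
      have px2 : ¬ (a + 1 ≤ x) := by omega
      have px3 : a - 1 ≤ x := by omega
      have mx : min x (a-1) = x := min_eq_left (by omega)
      have Mx : max x (a+1) = a + 1 := max_eq_right (by omega)
      have py1 : ¬ (a ≤ y) := by omega
      have py2 : ¬ (a + 1 ≤ y) := by omega
      have py3 : ¬ (a - 1 ≤ y) := by omega
      have my : min y (a-1) = y := min_eq_left (by omega)
      have My : max y (a+1) = a + 1 := max_eq_right (by omega)
      simp [E, mxy, Mxy, px1, px2, px3, mx, Mx, py1, py2, py3, my, My]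
      split_ifs <;> omega
    · have px1 : ¬ (a ≤ x) := by omega
      have px2 : ¬ (a + 1 ≤ x) := by omega
      have px3 : ¬ (a - 1 ≤ x) := by omega
      have mx : min x (a-1) = x := min_eq_left (by omega)
      have Mx : max x (a+1) = a + 1 := max_eq_right (by omega)
      have py1 : a ≤ y := by omega
      have py2 : a + 1 ≤ y := by omega
      have py3 : a - 1 ≤ y := by omega
      have my : min y (a-1) = a - 1 := min_eq_right (by omega)
      have My : max y (a+1) = y := max_eq_left (by omega)
      simp [E, mxy, Mxy, px1, px2, px3, mx, Mx, py1, py2, py3, my, My]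
      split_ifs <;> omega
    · have px1 : ¬ (a ≤ x) := by omega
      have px2 : ¬ (a + 1 ≤ x) := by omega
      have px3 : ¬ (a - 1 ≤ x) := by omega
      have mx : min x (a-1) = x := min_eq_left (by omega)
      have Mx : max x (a+1) = a + 1 := max_eq_right (by omega)
      have py1 : a ≤ y := by omega
      have py2 : ¬ (a + 1 ≤ y) := by omega
      have py3 : a - 1 ≤ y := by omega
      have my : min y (a-1) = a - 1 := min_eq_right (by omega)
      have My : max y (a+1) = a + 1 := max_eq_right (by omega)
      simp [E, mxy, Mxy, px1, px2, px3, mx, Mx, py1, py2, py3, my, My]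
      split_ifs <;> omega
    · have px1 : ¬ (a ≤ x) := by omega
      have px2 : ¬ (a + 1 ≤ x) := by omega
      have px3 : ¬ (a - 1 ≤ x) := by omega
      have mx : min x (a-1) = x := min_eq_left (by omega)
      have Mx : max x (a+1) = a + 1 := max_eq_right (by omega)
      have py1 : ¬ (a ≤ y) := by omega
      have py2 : ¬ (a + 1 ≤ y) := by omega
      have py3 : a - 1 ≤ y := by omega
      have my : min y (a-1) = y := min_eq_left (by omega)
      have My : max y (a+1) = a + 1 := max_eq_right (by omega)
      simp [E, mxy, Mxy, px1, px2, px3, mx, Mx, py1, py2, py3, my, My]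
      split_ifs <;> omega
    · have px1 : ¬ (a ≤ x) := by omega
      have px2 : ¬ (a + 1 ≤ x) := by omega
      have px3 : ¬ (a - 1 ≤ x) := by omega
      have mx : min x (a-1) = x := min_eq_left (by omega)
      have Mx : max x (a+1) = a + 1 := max_eq_right (by omega)
      have py1 : ¬ (a ≤ y) := by omega
      have py2 : ¬ (a + 1 ≤ y) := by omega
      have py3 : ¬ (a - 1 ≤ y) := by omega
      have my : min y (a-1) = y := min_eq_left (by omega)
      have My : max y (a+1) = a + 1 := max_eq_right (by omega)
      simp [E, mxy, Mxy, px1, px2, px3, mx, Mx, py1, py2, py3, my, My]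
      split_ifs <;> omega
  case _ =>
    have mxy : min x y = y := min_eq_right hxy.le
    have Mxy : max x y = x := max_eq_left hxy.le
    rcases (show a+1 ≤ x ∨ a = x ∨ a = x+1 ∨ x+2 ≤ a by omega) with hx|hx|hx|hx <;>
      rcases (show a+1 ≤ y ∨ a = y ∨ a = y+1 ∨ y+2 ≤ a by omega) with hy|hy|hy|hy
    · have px1 : a ≤ x := by omega
      have px2 : a + 1 ≤ x := by omega
      have px3 : a - 1 ≤ x := by omega
      have mx : min x (a-1) = a - 1 := min_eq_right (by omega)
      have Mx : max x (a+1) = x := max_eq_left (by omega)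
      have py1 : a ≤ y := by omega
      have py2 : a + 1 ≤ y := by omega
      have py3 : a - 1 ≤ y := by omega
      have my : min y (a-1) = a - 1 := min_eq_right (by omega)
      have My : max y (a+1) = y := max_eq_left (by omega)
      simp [E, mxy, Mxy, px1, px2, px3, mx, Mx, py1, py2, py3, my, My]
      split_ifs <;> omega
    · have px1 : a ≤ x := by omega
      have px2 : a + 1 ≤ x := by omega
      have px3 : a - 1 ≤ x := by omega
      have mx : min x (a-1) = a - 1 := min_eq_right (by omega)
      have Mx : max x (a+1) = x := max_eq_left (by omega)
      have py1 : a ≤ y := by omega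
      have py2 : ¬ (a + 1 ≤ y) := by omega
      have py3 : a - 1 ≤ y := by omega
      have my : min y (a-1) = a - 1 := min_eq_right (by omega)
      have My : max y (a+1) = a + 1 := max_eq_right (by omega)
      simp [E, mxy, Mxy, px1, px2, px3, mx, Mx, py1, py2, py3, my, My]
      split_ifs <;> omega
    · have px1 : a ≤ x := by omega
      have px2 : a + 1 ≤ x := by omega
      have px3 : a - 1 ≤ x := by omega
      have mx : min x (a-1) = a - 1 := min_eq_right (by omega)
      have Mx : max x (a+1) = x := max_eq_left (by omega)
      have py1 : ¬ (a ≤ y) := by omega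
      have py2 : ¬ (a + 1 ≤ y) := by omega
      have py3 : a - 1 ≤ y := by omega
      have my : min y (a-1) = y := min_eq_left (by omega)
      have My : max y (a+1) = a + 1 := max_eq_right (by omega)
      simp [E, mxy, Mxy, px1, px2, px3, mx, Mx, py1, py2, py3, my, My]
      split_ifs <;> omega
    · have px1 : a ≤ x := by omega
      have px2 : a + 1 ≤ x := by omega
      have px3 : a - 1 ≤ x := by omega
      have mx : min x (a-1) = a - 1 := min_eq_right (by omega)
      have Mx : max x (a+1) = x := max_eq_left (by omega)
      have py1 : ¬ (a ≤ y) := by omega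
      have py2 : ¬ (a + 1 ≤ y) := by omega
      have py3 : ¬ (a - 1 ≤ y) := by omega
      have my : min y (a-1) = y := min_eq_left (by omega)
      have My : max y (a+1) = a + 1 := max_eq_right (by omega)
      simp [E, mxy, Mxy, px1, px2, px3, mx, Mx, py1, py2, py3, my, My]
      split_ifs <;> omega
    · have px1 : a ≤ x := by omega
      have px2 : ¬ (a + 1 ≤ x) := by omega
      have px3 : a - 1 ≤ x := by omega
      have mx : min x (a-1) = a - 1 := min_eq_right (by omega)
      have Mx : max x (a+1) = a + 1 := max_eq_right (by omega)
      have py1 : a ≤ y := by omega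
      have py2 : a + 1 ≤ y := by omega
      have py3 : a - 1 ≤ y := by omega
      have my : min y (a-1) = a - 1 := min_eq_right (by omega)
      have My : max y (a+1) = y := max_eq_left (by omega)
      simp [E, mxy, Mxy, px1, px2, px3, mx, Mx, py1, py2, py3, my, My]
      split_ifs <;> omega
    · have px1 : a ≤ x := by omega
      have px2 : ¬ (a + 1 ≤ x) := by omega
      have px3 : a - 1 ≤ x := by omega
      have mx : min x (a-1) = a - 1 := min_eq_right (by omega)
      have Mx : max x (a+1) = a + 1 := max_eq_right (by omega)
      have py1 : a ≤ y := by omega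
      have py2 : ¬ (a + 1 ≤ y) := by omega
      have py3 : a - 1 ≤ y := by omega
      have my : min y (a-1) = a - 1 := min_eq_right (by omega)
      have My : max y (a+1) = a + 1 := max_eq_right (by omega)
      simp [E, mxy, Mxy, px1, px2, px3, mx, Mx, py1, py2, py3, my, My]
      split_ifs <;> omega
    · have px1 : a ≤ x := by omega
      have px2 : ¬ (a + 1 ≤ x) := by omega
      have px3 : a - 1 ≤ x := by omega
      have mx : min x (a-1) = a - 1 := min_eq_right (by omega)
      have Mx : max x (a+1) = a + 1 := max_eq_right (by omega)
      have py1 : ¬ (a ≤ y) := by omega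
      have py2 : ¬ (a + 1 ≤ y) := by omega
      have py3 : a - 1 ≤ y := by omega
      have my : min y (a-1) = y := min_eq_left (by omega)
      have My : max y (a+1) = a + 1 := max_eq_right (by omega)
      simp [E, mxy, Mxy, px1, px2, px3, mx, Mx, py1, py2, py3, my, My]
      split_ifs <;> omega
    · have px1 : a ≤ x := by omega
      have px2 : ¬ (a + 1 ≤ x) := by omega
      have px3 : a - 1 ≤ x := by omega
      have mx : min x (a-1) = a - 1 := min_eq_right (by omega)
      have Mx : max x (a+1) = a + 1 := max_eq_right (by omega)
      have py1 : ¬ (a ≤ y) := by omega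
      have py2 : ¬ (a + 1 ≤ y) := by omega
      have py3 : ¬ (a - 1 ≤ y) := by omega
      have my : min y (a-1) = y := min_eq_left (by omega)
      have My : max y (a+1) = a + 1 := max_eq_right (by omega)
      simp [E, mxy, Mxy, px1, px2, px3, mx, Mx, py1, py2, py3, my, My]
      split_ifs <;> omega
    · have px1 : ¬ (a ≤ x) := by omega
      have px2 : ¬ (a + 1 ≤ x) := by omega
      have px3 : a - 1 ≤ x := by omega
      have mx : min x (a-1) = x := min_eq_left (by omega)
      have Mx : max x (a+1) = a + 1 := max_eq_right (by omega)
      have py1 : a ≤ y := by omega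
      have py2 : a + 1 ≤ y := by omega
      have py3 : a - 1 ≤ y := by omega
      have my : min y (a-1) = a - 1 := min_eq_right (by omega)
      have My : max y (a+1) = y := max_eq_left (by omega)
      simp [E, mxy, Mxy, px1, px2, px3, mx, Mx, py1, py2, py3, my, My]
      split_ifs <;> omega
    · have px1 : ¬ (a ≤ x) := by omega
      have px2 : ¬ (a + 1 ≤ x) := by omega
      have px3 : a - 1 ≤ x := by omega
      have mx : min x (a-1) = x := min_eq_left (by omega)
      have Mx : max x (a+1) = a + 1 := max_eq_right (by omega)
      have py1 : a ≤ y := by omega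
      have py2 : ¬ (a + 1 ≤ y) := by omega
      have py3 : a - 1 ≤ y := by omega
      have my : min y (a-1) = a - 1 := min_eq_right (by omega)
      have My : max y (a+1) = a + 1 := max_eq_right (by omega)
      simp [E, mxy, Mxy, px1, px2, px3, mx, Mx, py1, py2, py3, my, My]
      split_ifs <;> omega
    · have px1 : ¬ (a ≤ x) := by omega
      have px2 : ¬ (a + 1 ≤ x) := by omega
      have px3 : a - 1 ≤ x := by omega
      have mx : min x (a-1) = x := min_eq_left (by omega)
      have Mx : max x (a+1) = a + 1 := max_eq_right (by omega)
      have py1 : ¬ (a ≤ y) := by omega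
      have py2 : ¬ (a + 1 ≤ y) := by omega
      have py3 : a - 1 ≤ y := by omega
      have my : min y (a-1) = y := min_eq_left (by omega)
      have My : max y (a+1) = a + 1 := max_eq_right (by omega)
      simp [E, mxy, Mxy, px1, px2, px3, mx, Mx, py1, py2, py3, my, My]
      split_ifs <;> omega
    · have px1 : ¬ (a ≤ x) := by omega
      have px2 : ¬ (a + 1 ≤ x) := by omega
      have px3 : a - 1 ≤ x := by omega
      have mx : min x (a-1) = x := min_eq_left (by omega)
      have Mx : max x (a+1) = a + 1 := max_eq_right (by omega)
      have py1 : ¬ (a ≤ y) := by omega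
      have py2 : ¬ (a + 1 ≤ y) := by omega
      have py3 : ¬ (a - 1 ≤ y) := by omega
      have my : min y (a-1) = y := min_eq_left (by omega)
      have My : max y (a+1) = a + 1 := max_eq_right (by omega)
      simp [E, mxy, Mxy, px1, px2, px3, mx, Mx, py1, py2, py3, my, My]
      split_ifs <;> omega
    · have px1 : ¬ (a ≤ x) := by omega
      have px2 : ¬ (a + 1 ≤ x) := by omega
      have px3 : ¬ (a - 1 ≤ x) := by omega
      have mx : min x (a-1) = x := min_eq_left (by omega)
      have Mx : max x (a+1) = a + 1 := max_eq_right (by omega)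
      have py1 : a ≤ y := by omega
      have py2 : a + 1 ≤ y := by omega
      have py3 : a - 1 ≤ y := by omega
      have my : min y (a-1) = a - 1 := min_eq_right (by omega)
      have My : max y (a+1) = y := max_eq_left (by omega)
      simp [E, mxy, Mxy, px1, px2, px3, mx, Mx, py1, py2, py3, my, My]
      split_ifs <;> omega
    · have px1 : ¬ (a ≤ x) := by omega
      have px2 : ¬ (a + 1 ≤ x) := by omega
      have px3 : ¬ (a - 1 ≤ x) := by omega
      have mx : min x (a-1) = x := min_eq_left (by omega)
      have Mx : max x (a+1) = a + 1 := max_eq_right (by omega)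
      have py1 : a ≤ y := by omega
      have py2 : ¬ (a + 1 ≤ y) := by omega
      have py3 : a - 1 ≤ y := by omega
      have my : min y (a-1) = a - 1 := min_eq_right (by omega)
      have My : max y (a+1) = a + 1 := max_eq_right (by omega)
      simp [E, mxy, Mxy, px1, px2, px3, mx, Mx, py1, py2, py3, my, My]
      split_ifs <;> omega
    · have px1 : ¬ (a ≤ x) := by omega
      have px2 : ¬ (a + 1 ≤ x) := by omega
      have px3 : ¬ (a - 1 ≤ x) := by omega
      have mx : min x (a-1) = x := min_eq_left (by omega)
      have Mx : max x (a+1) = a + 1 := max_eq_right (by omega)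
      have py1 : ¬ (a ≤ y) := by omega
      have py2 : ¬ (a + 1 ≤ y) := by omega
      have py3 : a - 1 ≤ y := by omega
      have my : min y (a-1) = y := min_eq_left (by omega)
      have My : max y (a+1) = a + 1 := max_eq_right (by omega)
      simp [E, mxy, Mxy, px1, px2, px3, mx, Mx, py1, py2, py3, my, My]
      split_ifs <;> omega
    · have px1 : ¬ (a ≤ x) := by omega
      have px2 : ¬ (a + 1 ≤ x) := by omega
      have px3 : ¬ (a - 1 ≤ x) := by omega
      have mx : min x (a-1) = x := min_eq_left (by omega)
      have Mx : max x (a+1) = a + 1 := max_eq_right (by omega)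
      have py1 : ¬ (a ≤ y) := by omega
      have py2 : ¬ (a + 1 ≤ y) := by omega
      have py3 : ¬ (a - 1 ≤ y) := by omega
      have my : min y (a-1) = y := min_eq_left (by omega)
      have My : max y (a+1) = a + 1 := max_eq_right (by omega)
      simp [E, mxy, Mxy, px1, px2, px3, mx, Mx, py1, py2, py3, my, My]
      split_ifs <;> omega


lemma F_neg1 (X : ℤ → ℤ) (a : ℤ) : F X (a, -1) = E (X (-1)) (X 0) a := by
  rw [← pair_diff (X (-1)) (X 0) a]
  have hones : sliceOnes X (a, -1) =
      ((if a ≤ X (-1) then 1 else 0) + (if a+1 ≤ X (-1) then 1 else 0) + (if a ≤ X 0 then 1 else 0)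
      + (if a+1 ≤ X 0 then 1 else 0) : ℕ) := by
    rw [ones_eq]; norm_num
  simp only [F, sliceSum, update_apply, hones]
  norm_num
  split_ifs <;> omega

lemma F_zero (X : ℤ → ℤ) (a : ℤ) : F X (a, 0) = E (X 0) (X 1) a := by
  rw [← pair_diff (X 0) (X 1) a]
  have hones : sliceOnes X (a, 0) =
      ((if a ≤ X 0 then 1 else 0) + (if a+1 ≤ X 0 then 1 else 0) + (if a ≤ X 1 then 1 else 0)
      + (if a+1 ≤ X 1 then 1 else 0) : ℕ) := by
    rw [ones_eq]; norm_num
  simp only [F, sliceSum, update_apply, hones]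
  norm_num
  split_ifs <;> omega


lemma F_other (X : ℤ → ℤ) (a b : ℤ) (hb : b < -2 ∨ 1 < b) : F X (a, b) = 0 := by
  have h1 : ¬((-1:ℤ) = b ∨ (-1:ℤ) = b + 1) := by omega
  have h2 : ¬((0:ℤ) = b ∨ (0:ℤ) = b + 1) := by omega
  have h3 : ¬((1:ℤ) = b ∨ (1:ℤ) = b + 1) := by omega
  simp only [F, sliceSum, update_apply, h1, h2, h3, if_false]
  split_ifs <;> omega

lemma F_neg2 (X : ℤ → ℤ) (a : ℤ) : F X (a, -2) = if a = X (-1) then -1 else 0 := by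
  simp only [F, sliceSum, update_apply, ones_eq]
  norm_num
  split_ifs <;> omega

lemma F_one (X : ℤ → ℤ) (a : ℤ) : F X (a, 1) = if a = X 1 then -1 else 0 := by
  simp only [F, sliceSum, update_apply, ones_eq]
  norm_num
  split_ifs <;> omega

lemma E_supp (x y a : ℤ) (h : E x y a ≠ 0) :
    a = min x y ∨ a = min x y + 1 ∨ a = max x y := by
  simp only [E] at h
  split_ifs at h <;> omega

lemma E_supp_fin (x y : ℤ) : (Function.support (fun a => E x y a)).Finite := by
  apply Set.Finite.subset
    (((Set.finite_singleton (max x y)).insert (min x y + 1)).insert (min x y))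
  intro a ha
  rcases E_supp x y a ha with h|h|h <;> simp [h]

lemma ind_supp_fin (c v : ℤ) : (Function.support (fun a : ℤ => if a = c then v else 0)).Finite := by
  apply Set.Finite.subset (Set.finite_singleton c)
  intro a ha
  by_contra h
  simp only [Set.mem_singleton_iff] at h
  simp [Function.mem_support, h] at ha

lemma ind_sum (c v : ℤ) : ∑ᶠ a : ℤ, (if a = c then v else 0) = v := by
  rw [finsum_eq_single _ c (fun x hx => if_neg hx), if_pos rfl]

lemma E_sum (x y : ℤ) : ∑ᶠ a : ℤ, E x y a = if x - y = 1 ∨ y - x = 1 then 0 else 2 := by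
  rcases eq_or_ne x y with h | h
  · subst h
    rw [if_neg (by omega)]
    rw [finsum_eq_single _ x (fun a ha => by simp [E, ha])]
    simp [E]
  · by_cases h1 : x - y = 1 ∨ y - x = 1
    · rw [if_pos h1]
      rw [finsum_eq_sum_of_support_subset _
        (s := ({min x y, max x y} : Finset ℤ)) (by
          intro a ha
          rcases E_supp x y a ha with h'|h'|h' <;> simp [h'] <;> omega)]
      rw [Finset.sum_pair (by omega)]
      simp only [E, if_neg h, if_pos h1]
      split_ifs <;> omega
    · rw [if_neg h1]
      rw [finsum_eq_sum_of_support_subset _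
        (s := ({min x y, min x y + 1, max x y} : Finset ℤ)) (by
          intro a ha
          rcases E_supp x y a ha with h'|h'|h' <;> simp [h'])]
      rw [Finset.sum_insert (by simp; omega), Finset.sum_insert (by simp; omega),
        Finset.sum_singleton]
      simp only [E, if_neg h, if_neg h1]
      split_ifs <;> omega

lemma fin_add {f g : ℤ → ℤ} (hf : (Function.support f).Finite)
    (hg : (Function.support g).Finite) :
    (Function.support (fun a => f a + g a)).Finite :=
  (hf.union hg).subset (Function.support_add f g)

lemma row_sum_F (X : ℤ → ℤ) (a : ℤ) : ∑ᶠ b : ℤ, F X (a, b) =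
    (if a = X (-1) then -1 else 0) + E (X (-1)) (X 0) a + E (X 0) (X 1) a
      + (if a = X 1 then -1 else 0) := by
  rw [finsum_eq_sum_of_support_subset _ (s := ({-2,-1,0,1} : Finset ℤ)) (by
    intro b hb
    simp only [Function.mem_support] at hb
    simp only [Finset.coe_insert, Set.mem_insert_iff, Finset.coe_singleton,
      Set.mem_singleton_iff]
    by_contra hc
    push_neg at hc
    exact hb (F_other X a b (by omega)))]
  rw [show ({-2,-1,0,1} : Finset ℤ) = insert (-2) (insert (-1) (insert 0 {1})) from rfl]
  rw [Finset.sum_insert (by decide), Finset.sum_insert (by decide),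
    Finset.sum_insert (by decide), Finset.sum_singleton]
  rw [F_neg2, F_neg1, F_zero, F_one]
  ring

/-- In the slice process, the drift of `Σ_t = X_t(-1) + X_t(0) + X_t(1)`
satisfies `D(Σ_t) = 2 (N(X_t) - 1)` where `N(X_t) = 𝟙{|X⁺| ≠ 1} + 𝟙{|X⁻| ≠ 1}`,
`X⁺ = X(1) - X(0)`, `X⁻ = X(-1) - X(0)`.  (The middle coordinate cannot be simultaneously
strictly smaller than the other two.) -/
theorem slice_sum_drift (X : ℤ → ℤ)
    (hmid : ¬ (X 0 < X (-1) ∧ X 0 < X 1)) :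
    sumDrift X =
      2 * (((if |X 1 - X 0| ≠ 1 then 1 else 0) + (if |X (-1) - X 0| ≠ 1 then 1 else 0)) - 1) := by
  classical
  have hdrift : sumDrift X = ∑ᶠ p : ℤ × ℤ, F X p := rfl
  set A : Finset ℤ := {X (-1), X 1, min (X (-1)) (X 0), min (X (-1)) (X 0) + 1,
    max (X (-1)) (X 0), min (X 0) (X 1), min (X 0) (X 1) + 1, max (X 0) (X 1)} with hA
  have hfin : (Function.support (F X)).Finite := by
    apply Set.Finite.subset (Finset.finite_toSet (A ×ˢ ({-2,-1,0,1} : Finset ℤ)))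
    rintro ⟨a, b⟩ hp
    simp only [Function.mem_support] at hp
    have hb : b = -2 ∨ b = -1 ∨ b = 0 ∨ b = 1 := by
      by_contra hb
      push_neg at hb
      exact hp (F_other X a b (by omega))
    simp only [Finset.coe_product, Set.mem_prod, Finset.mem_coe, Finset.mem_product,
      Finset.mem_insert, Finset.mem_singleton, hA]
    refine ⟨?_, by omega⟩
    rcases hb with h|h|h|h <;> subst h
    · rw [F_neg2] at hp
      split_ifs at hp with h
      · tauto
      · exact absurd rfl hp
    · rw [F_neg1] at hp
      rcases E_supp _ _ _ hp with h|h|h <;> tauto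
    · rw [F_zero] at hp
      rcases E_supp _ _ _ hp with h|h|h <;> tauto
    · rw [F_one] at hp
      split_ifs at hp with h
      · tauto
      · exact absurd rfl hp
  rw [hdrift, finsum_curry _ hfin]
  have h1 := ind_supp_fin (X (-1)) (-1)
  have h4 := ind_supp_fin (X 1) (-1)
  have h2 := E_supp_fin (X (-1)) (X 0)
  have h3 := E_supp_fin (X 0) (X 1)
  simp only [row_sum_F]
  rw [finsum_add_distrib (fin_add (fin_add h1 h2) h3) h4,
    finsum_add_distrib (fin_add h1 h2) h3,
    finsum_add_distrib h1 h2,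
    ind_sum, ind_sum, E_sum, E_sum]
  have e1 : |X 1 - X 0| = 1 ↔ (X 0 - X 1 = 1 ∨ X 1 - X 0 = 1) := by
    rw [abs_eq (by norm_num : (0:ℤ) ≤ 1)]; omega
  have e2 : |X (-1) - X 0| = 1 ↔ (X (-1) - X 0 = 1 ∨ X 0 - X (-1) = 1) := by
    rw [abs_eq (by norm_num : (0:ℤ) ≤ 1)]; omega
  simp only [ne_eq, e1, e2]
  split_ifs <;> omega
end

section
/- Consider the contour of a configuration of the slice process and its oriented portion $\vec\gamma$ from $\gamma^+ = (X_t(1) + 1/2, 3/2)$ to $\gamma^- = (X_t(-1) + 1/2, -3/2)$. Then $\vec\gamma$ has exactly $G_t + 4$ vertices, and the number of right turns along $\vec\gamma$ minus the number of left turns equals 2. -/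
/-- The finite oriented portion of the contour of the slice configuration from
`γ⁺ = (X(1) + 1/2, 3/2)` to `γ⁻ = (X(-1) + 1/2, -3/2)`, described by the set of dual lattice
points on it.  A dual point `c + (1/2, 1/2)` (coded by `c ∈ ℤ²`) lies on the contour iff its
four primal nearest neighbors `c, c + e₁, c + e₂, c + e₁ + e₂` are not all in the same state,
i.e. `1 ≤ sliceOnes X c ≤ 3`; the portion `γ` consists of the contour points without the two
infinite horizontal rays, namely the points `(c₁ + 1/2, 3/2)` with `c₁ < X(1)` and the points
`(c₁ + 1/2, -3/2)` with `c₁ < X(-1)`. -/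
def gammaPath (X : ℤ → ℤ) : Set (ℤ × ℤ) :=
  {c : ℤ × ℤ | 1 ≤ sliceOnes X c ∧ sliceOnes X c ≤ 3 ∧
    ¬ (c.2 = 1 ∧ c.1 < X 1) ∧ ¬ (c.2 = -2 ∧ c.1 < X (-1))}

lemma pair_square (x y : ℤ) :
    Finset.Icc ((x, y) : ℤ × ℤ) ((x, y) + (1, 1)) =
      {(x, y), (x + 1, y), (x, y + 1), (x + 1, y + 1)} := by
  ext ⟨u, v⟩
  simp [Finset.mem_Icc, Prod.le_def, Prod.ext_iff]
  omega

lemma sliceOnes_eq (X : ℤ → ℤ) (x y : ℤ) :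
    sliceOnes X (x, y) =
      (if |y| ≤ 1 ∧ x ≤ X y then 1 else 0) +
      (if |y| ≤ 1 ∧ x + 1 ≤ X y then 1 else 0) +
      (if |y + 1| ≤ 1 ∧ x ≤ X (y + 1) then 1 else 0) +
      (if |y + 1| ≤ 1 ∧ x + 1 ≤ X (y + 1) then 1 else 0) := by
  rw [sliceOnes, pair_square, Finset.card_filter]
  rw [Finset.sum_insert (by simp [Prod.ext_iff]),
      Finset.sum_insert (by simp [Prod.ext_iff]),
      Finset.sum_insert (by simp [Prod.ext_iff]),
      Finset.sum_singleton]
  simp [sliceState, decide_eq_true_eq]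
  ring

lemma mem_gamma (X : ℤ → ℤ) (x y : ℤ) :
    (x, y) ∈ gammaPath X ↔
      (y = 1 ∧ x = X 1) ∨ (y = -2 ∧ x = X (-1)) ∨
      (y = 0 ∧ min (X 0) (X 1) ≤ x ∧ x ≤ max (X 0) (X 1)) ∨
      (y = -1 ∧ min (X 0) (X (-1)) ≤ x ∧ x ≤ max (X 0) (X (-1))) := by
  by_cases hy : -2 ≤ y ∧ y ≤ 1
  · obtain ⟨h1, h2⟩ := hy
    simp only [gammaPath, Set.mem_setOf_eq, sliceOnes_eq]
    interval_cases y <;> norm_num [abs_le] <;> split_ifs <;> omega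
  · have h1 : ¬ (|y| ≤ 1) := by rw [abs_le]; omega
    have h2 : ¬ (|y + 1| ≤ 1) := by rw [abs_le]; omega
    simp only [gammaPath, Set.mem_setOf_eq, sliceOnes_eq, h1, h2, false_and, if_false]
    constructor
    · rintro ⟨h, -⟩; omega
    · rintro (⟨h, -⟩ | ⟨h, -⟩ | ⟨h, -⟩ | ⟨h, -⟩) <;> omega

lemma mem_gamma1 (X : ℤ → ℤ) (x y : ℤ) :
    ((x, y) ∈ gammaPath X ∧ sliceOnes X (x, y) = 1) ↔
      (y = 1 ∧ x = X 1) ∨ (y = -2 ∧ x = X (-1)) ∨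
      (y = 0 ∧ X 0 ≠ X 1 ∧ x = max (X 0) (X 1)) ∨
      (y = -1 ∧ X 0 ≠ X (-1) ∧ x = max (X 0) (X (-1))) := by
  by_cases hy : -2 ≤ y ∧ y ≤ 1
  · obtain ⟨h1, h2⟩ := hy
    simp only [gammaPath, Set.mem_setOf_eq, sliceOnes_eq]
    interval_cases y <;> norm_num [abs_le] <;> split_ifs <;> omega
  · have h1 : ¬ (|y| ≤ 1) := by rw [abs_le]; omega
    have h2 : ¬ (|y + 1| ≤ 1) := by rw [abs_le]; omega
    simp only [gammaPath, Set.mem_setOf_eq, sliceOnes_eq, h1, h2, false_and, if_false]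
    constructor
    · rintro ⟨⟨h, -⟩, -⟩; omega
    · rintro (⟨h, -⟩ | ⟨h, -⟩ | ⟨h, -⟩ | ⟨h, -⟩) <;> omega

lemma mem_gamma3 (X : ℤ → ℤ) (x y : ℤ) :
    ((x, y) ∈ gammaPath X ∧ sliceOnes X (x, y) = 3) ↔
      (y = 0 ∧ X 0 ≠ X 1 ∧ x = min (X 0) (X 1)) ∨
      (y = -1 ∧ X 0 ≠ X (-1) ∧ x = min (X 0) (X (-1))) := by
  by_cases hy : -2 ≤ y ∧ y ≤ 1
  · obtain ⟨h1, h2⟩ := hy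
    simp only [gammaPath, Set.mem_setOf_eq, sliceOnes_eq]
    interval_cases y <;> norm_num [abs_le] <;> split_ifs <;> omega
  · have h1 : ¬ (|y| ≤ 1) := by rw [abs_le]; omega
    have h2 : ¬ (|y + 1| ≤ 1) := by rw [abs_le]; omega
    simp only [gammaPath, Set.mem_setOf_eq, sliceOnes_eq, h1, h2, false_and, if_false]
    constructor
    · rintro ⟨⟨h, -⟩, -⟩; omega
    · rintro (⟨h, -⟩ | ⟨h, -⟩) <;> omega

noncomputable def Fall (X : ℤ → ℤ) : Finset (ℤ × ℤ) :=
  ({(X 1, 1), (X (-1), -2)} : Finset (ℤ × ℤ)) ∪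
    (Finset.Icc (min (X 0) (X 1)) (max (X 0) (X 1))).image (fun z => (z, 0)) ∪
    (Finset.Icc (min (X 0) (X (-1))) (max (X 0) (X (-1)))).image (fun z => (z, -1))

lemma gamma_eq (X : ℤ → ℤ) : gammaPath X = ↑(Fall X) := by
  ext ⟨x, y⟩
  rw [mem_gamma]
  simp only [Fall, Finset.coe_union, Set.mem_union, Finset.coe_image, Finset.coe_insert,
    Set.mem_insert_iff, Finset.coe_singleton, Set.mem_singleton_iff, Set.mem_image,
    Finset.mem_coe, Finset.mem_Icc, Prod.mk.injEq]
  constructor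
  · rintro (⟨h1, h2⟩ | ⟨h1, h2⟩ | ⟨h1, h2, h3⟩ | ⟨h1, h2, h3⟩)
    · exact Or.inl (Or.inl (Or.inl ⟨h2, h1⟩))
    · exact Or.inl (Or.inl (Or.inr ⟨h2, h1⟩))
    · exact Or.inl (Or.inr ⟨x, ⟨h2, h3⟩, rfl, h1.symm⟩)
    · exact Or.inr ⟨x, ⟨h2, h3⟩, rfl, h1.symm⟩
  · rintro (((⟨h1, h2⟩ | ⟨h1, h2⟩) | ⟨z, ⟨hz1, hz2⟩, rfl, h4⟩) | ⟨z, ⟨hz1, hz2⟩, rfl, h4⟩)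
    · exact Or.inl ⟨h2, h1⟩
    · exact Or.inr (Or.inl ⟨h2, h1⟩)
    · exact Or.inr (Or.inr (Or.inl ⟨h4.symm, hz1, hz2⟩))
    · exact Or.inr (Or.inr (Or.inr ⟨h4.symm, hz1, hz2⟩))

lemma card_Fall (X : ℤ → ℤ) :
    (Fall X).card = (X 1 - X 0).natAbs + (X (-1) - X 0).natAbs + 4 := by
  rw [Fall, Finset.card_union_of_disjoint, Finset.card_union_of_disjoint,
    Finset.card_image_of_injective _ (fun a b h => by simpa using h),
    Finset.card_image_of_injective _ (fun a b h => by simpa using h),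
    Int.card_Icc, Int.card_Icc,
    Finset.card_insert_of_notMem (by simp), Finset.card_singleton]
  · omega
  · rw [Finset.disjoint_left]
    rintro ⟨x, y⟩ h h'
    simp [Prod.ext_iff] at h h'
    rcases h with ⟨-, h⟩ | ⟨-, h⟩ <;> omega
  · rw [Finset.disjoint_left]
    rintro ⟨x, y⟩ h h'
    simp [Prod.ext_iff] at h h'
    rcases h with (⟨-, h⟩ | ⟨-, h⟩) | ⟨-, h⟩ <;> omega
noncomputable def F1 (X : ℤ → ℤ) : Finset (ℤ × ℤ) :=
  ({(X 1, 1), (X (-1), -2)} : Finset (ℤ × ℤ)) ∪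
    (if X 0 = X 1 then ∅ else {(max (X 0) (X 1), 0)}) ∪
    (if X 0 = X (-1) then ∅ else {(max (X 0) (X (-1)), -1)})

noncomputable def F3 (X : ℤ → ℤ) : Finset (ℤ × ℤ) :=
  (if X 0 = X 1 then ∅ else {(min (X 0) (X 1), 0)}) ∪
    (if X 0 = X (-1) then ∅ else {(min (X 0) (X (-1)), -1)})

lemma g1_eq (X : ℤ → ℤ) : {c ∈ gammaPath X | sliceOnes X c = 1} = ↑(F1 X) := by
  ext ⟨x, y⟩
  simp only [Set.mem_setOf_eq]
  rw [mem_gamma1, F1]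
  split_ifs with h1 h2 h2 <;> simp [Prod.ext_iff] <;> omega

lemma g3_eq (X : ℤ → ℤ) : {c ∈ gammaPath X | sliceOnes X c = 3} = ↑(F3 X) := by
  ext ⟨x, y⟩
  simp only [Set.mem_setOf_eq]
  rw [mem_gamma3, F3]
  split_ifs with h1 h2 h2 <;> simp [Prod.ext_iff] <;> omega

lemma card_F1_F3 (X : ℤ → ℤ) : (F1 X).card = (F3 X).card + 2 := by
  by_cases h1 : X 0 = X 1 <;> by_cases h2 : X 0 = X (-1)
  · have e1 : F1 X = {(X 1, 1), (X (-1), -2)} := by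
      rw [F1, if_pos h1, if_pos h2, Finset.union_empty, Finset.union_empty]
    have e3 : F3 X = ∅ := by
      rw [F3, if_pos h1, if_pos h2, Finset.union_empty]
    rw [e1, e3, Finset.card_insert_of_notMem (by simp [Prod.ext_iff])]
    simp
  · have e1 : F1 X = {(X 1, 1), (X (-1), -2), (max (X 0) (X (-1)), -1)} := by
      rw [F1, if_pos h1, if_neg h2, Finset.union_empty]
      ext c; simp
    have e3 : F3 X = {(min (X 0) (X (-1)), -1)} := by
      rw [F3, if_pos h1, if_neg h2, Finset.empty_union]
    rw [e1, e3, Finset.card_insert_of_notMem (by simp [Prod.ext_iff]),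
      Finset.card_insert_of_notMem (by simp [Prod.ext_iff])]
    simp
  · have e1 : F1 X = {(X 1, 1), (X (-1), -2), (max (X 0) (X 1), 0)} := by
      rw [F1, if_neg h1, if_pos h2, Finset.union_empty]
      ext c; simp
    have e3 : F3 X = {(min (X 0) (X 1), 0)} := by
      rw [F3, if_neg h1, if_pos h2, Finset.union_empty]
    rw [e1, e3, Finset.card_insert_of_notMem (by simp [Prod.ext_iff]),
      Finset.card_insert_of_notMem (by simp [Prod.ext_iff])]
    simp
  · have e1 : F1 X =
        {(X 1, 1), (X (-1), -2), (max (X 0) (X 1), 0), (max (X 0) (X (-1)), -1)} := by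
      rw [F1, if_neg h1, if_neg h2]
      ext c; simp
    have e3 : F3 X = {(min (X 0) (X 1), 0), (min (X 0) (X (-1)), -1)} := by
      rw [F3, if_neg h1, if_neg h2]
      ext c; simp
    rw [e1, e3, Finset.card_insert_of_notMem (by simp [Prod.ext_iff]),
      Finset.card_insert_of_notMem (by simp [Prod.ext_iff]),
      Finset.card_insert_of_notMem (by simp [Prod.ext_iff]),
      Finset.card_insert_of_notMem (by simp [Prod.ext_iff])]
    simp

/-- The oriented portion `γ` of the contour of a slice-process configuration,
from `γ⁺ = (X(1) + 1/2, 3/2)` to `γ⁻ = (X(-1) + 1/2, -3/2)`, has exactly `G + 4` vertices,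
and the number of right turns (dual points whose `2 × 2` neighborhood contains exactly one
state-1 vertex) minus the number of left turns (exactly three state-1 vertices) equals 2. -/
theorem slice_contour_portion (X : ℤ → ℤ)
    (hmid : ¬ (X 0 < X (-1) ∧ X 0 < X 1)) :
    Nat.card (gammaPath X) = (X 1 - X 0).natAbs + (X (-1) - X 0).natAbs + 4 ∧
    (Nat.card {c ∈ gammaPath X | sliceOnes X c = 1} : ℤ) -
      (Nat.card {c ∈ gammaPath X | sliceOnes X c = 3} : ℤ) = 2 := by
  constructor
  · rw [Nat.card_coe_set_eq, gamma_eq, Set.ncard_coe_finset, card_Fall]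
  · rw [Nat.card_coe_set_eq, Nat.card_coe_set_eq, g1_eq, g3_eq,
      Set.ncard_coe_finset, Set.ncard_coe_finset, card_F1_F3]
    push_cast
    ring
end
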